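/- Let Ω ⊆ ℂ be open, f₁ : Ω → ℂ holomorphic with f₁' ≠ 0 on Ω, and define N : Ω → ℝ³ by N = (2Re f₁/(1+|f₁|²), 2Im f₁/(1+|f₁|²), (|f₁|²−1)/(1+|f₁|²)) and τ := log(2|f₁'|/(1+|f₁|²)). Let ρ : Ω → ℝ be any smooth function and define X : Ω → ℝ³ by X := e^{−2τ}(ρ_x N_x + ρ_y N_y) + ρ N (i.e. X = ∇ρ + ρN, the gradient taken with respect to the metric e^{2τ}(dx²+dy²)). Then on Ω one has ⟨X, N⟩ = ρ, ⟨X_x, N⟩ = 0 and ⟨X_y, N⟩ = 0; that is, N is a unit normal (Gauss map) for the map X and ρ is its support function. -/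

import Mathlib

open scoped RealInnerProductSpace

/-- Partial derivative in the `x`-direction of a function on `ℂ ≅ ℝ²`. -/
noncomputable def pdx (u : ℂ → ℝ) (z : ℂ) : ℝ := fderiv ℝ u z 1

/-- Partial derivative in the `y`-direction of a function on `ℂ ≅ ℝ²`. -/
noncomputable def pdy (u : ℂ → ℝ) (z : ℂ) : ℝ := fderiv ℝ u z Complex.I

open scoped RealInnerProductSpace
open Complex (I)

noncomputable def sv (x y z : ℝ) : EuclideanSpace ℝ (Fin 3) :=
  (EuclideanSpace.equiv (Fin 3) ℝ).symm ![x, y, z]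

@[simp] lemma sv_apply0 (x y z : ℝ) : sv x y z 0 = x := rfl
@[simp] lemma sv_apply1 (x y z : ℝ) : sv x y z 1 = y := rfl
@[simp] lemma sv_apply2 (x y z : ℝ) : sv x y z 2 = z := rfl

lemma inner_sv (x y z x' y' z' : ℝ) : ⟪sv x y z, sv x' y' z'⟫ = x*x' + y*y' + z*z' := by
  simp [sv, PiLp.inner_apply, Fin.sum_univ_three, RCLike.inner_apply]
  ring

lemma sv_diff {e1 e2 e3 : ℂ → ℝ} {z : ℂ} (h1 : DifferentiableAt ℝ e1 z)
    (h2 : DifferentiableAt ℝ e2 z) (h3 : DifferentiableAt ℝ e3 z) :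
    DifferentiableAt ℝ (fun w => sv (e1 w) (e2 w) (e3 w)) z := by
  apply (((EuclideanSpace.equiv (Fin 3) ℝ).symm).differentiable.differentiableAt).comp
  rw [differentiableAt_pi]
  intro i
  fin_cases i <;> simpa

noncomputable def NNc (u v : ℝ) : EuclideanSpace ℝ (Fin 3) :=
  sv (2*u * (1+(u*u+v*v))⁻¹) (2*v * (1+(u*u+v*v))⁻¹) ((u*u+v*v-1) * (1+(u*u+v*v))⁻¹)

noncomputable def nxv (u v a b : ℝ) : EuclideanSpace ℝ (Fin 3) :=
  sv ((2*a*(1+(u*u+v*v)) - 2*u*(2*u*a+2*v*b)) / (1+(u*u+v*v))^2)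
     ((2*b*(1+(u*u+v*v)) - 2*v*(2*u*a+2*v*b)) / (1+(u*u+v*v))^2)
     ((2*(2*u*a+2*v*b)) / (1+(u*u+v*v))^2)

lemma one_add_sq_pos (u v : ℝ) : 0 < 1 + (u*u+v*v) := by nlinarith [mul_self_nonneg u, mul_self_nonneg v]

lemma inner_NNc_self (u v : ℝ) : ⟪NNc u v, NNc u v⟫ = 1 := by
  have h := (one_add_sq_pos u v).ne'
  simp only [NNc, inner_sv]
  field_simp
  ring

lemma inner_nxv_NNc (u v a b : ℝ) : ⟪nxv u v a b, NNc u v⟫ = 0 := by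
  have h := (one_add_sq_pos u v).ne'
  simp only [NNc, nxv, inner_sv]
  field_simp
  ring

lemma inner_NNc_nxv (u v a b : ℝ) : ⟪NNc u v, nxv u v a b⟫ = 0 := by
  rw [real_inner_comm]; exact inner_nxv_NNc u v a b

lemma inner_nxv_nxv (u v a b : ℝ) :
    ⟪nxv u v a b, nxv u v a b⟫ = 4*(a*a+b*b) / (1+(u*u+v*v))^2 := by
  have h := (one_add_sq_pos u v).ne'
  simp only [nxv, inner_sv]
  field_simp
  ring

lemma inner_nxv_nyv (u v a b : ℝ) : ⟪nxv u v a b, nxv u v (-b) a⟫ = 0 := by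
  have h := (one_add_sq_pos u v).ne'
  simp only [nxv, inner_sv]
  field_simp
  ring

lemma inner_nyv_nxv (u v a b : ℝ) : ⟪nxv u v (-b) a, nxv u v a b⟫ = 0 := by
  rw [real_inner_comm]; exact inner_nxv_nyv u v a b

lemma nxv_diff {u v a b : ℂ → ℝ} {z : ℂ} (hu : DifferentiableAt ℝ u z)
    (hv : DifferentiableAt ℝ v z) (ha : DifferentiableAt ℝ a z) (hb : DifferentiableAt ℝ b z) :
    DifferentiableAt ℝ (fun w => nxv (u w) (v w) (a w) (b w)) z := by
  have h : ((1+(u z*u z+v z*v z))^2 : ℝ) ≠ 0 := pow_ne_zero _ (one_add_sq_pos (u z) (v z)).ne'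
  unfold nxv
  simp only [div_eq_mul_inv]
  apply sv_diff <;>
  · apply DifferentiableAt.mul
    · fun_prop
    · exact DifferentiableAt.inv (by fun_prop) h

lemma NN_hasFDerivAt {f : ℂ → ℂ} {z d : ℂ} (hf : HasDerivAt f d z) :
    ∃ L : ℂ →L[ℝ] EuclideanSpace ℝ (Fin 3),
      HasFDerivAt (fun w => NNc (f w).re (f w).im) L z ∧
      L 1 = nxv (f z).re (f z).im d.re d.im ∧
      L I = nxv (f z).re (f z).im (-d.im) d.re := by
  have hfR := hf.hasFDerivAt.restrictScalars ℝ
  have hu : HasFDerivAt (fun w => (f w).re)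
      (Complex.reCLM.comp ((ContinuousLinearMap.smulRight (1 : ℂ →L[ℂ] ℂ) d).restrictScalars ℝ)) z :=
    (Complex.reCLM.hasFDerivAt).comp z hfR
  have hv : HasFDerivAt (fun w => (f w).im)
      (Complex.imCLM.comp ((ContinuousLinearMap.smulRight (1 : ℂ →L[ℂ] ℂ) d).restrictScalars ℝ)) z :=
    (Complex.imCLM.hasFDerivAt).comp z hfR
  have hq := ((hu.mul hu).add (hv.mul hv)).const_add 1
  have hq0 : (1 + ((f z).re * (f z).re + (f z).im * (f z).im)) ≠ 0 := by
    nlinarith [mul_self_nonneg (f z).re, mul_self_nonneg (f z).im]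
  have hinv := (hasDerivAt_inv hq0).comp_hasFDerivAt z hq
  obtain ⟨L0, h0, h0x, h0y⟩ : ∃ L : ℂ →L[ℝ] ℝ,
      HasFDerivAt (fun w => 2*(f w).re * (1+((f w).re*(f w).re+(f w).im*(f w).im))⁻¹) L z ∧
      L 1 = (2*d.re*(1+((f z).re*(f z).re+(f z).im*(f z).im)) - 2*(f z).re*(2*(f z).re*d.re+2*(f z).im*d.im)) / (1+((f z).re*(f z).re+(f z).im*(f z).im))^2 ∧
      L I = (2*(-d.im)*(1+((f z).re*(f z).re+(f z).im*(f z).im)) - 2*(f z).re*(2*(f z).re*(-d.im)+2*(f z).im*d.re)) / (1+((f z).re*(f z).re+(f z).im*(f z).im))^2 := by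
    refine ⟨_, (hu.const_mul 2).mul hinv, ?_, ?_⟩ <;>
    · simp only [ContinuousLinearMap.add_apply, ContinuousLinearMap.smul_apply,
        ContinuousLinearMap.coe_comp', Function.comp_apply,
        ContinuousLinearMap.coe_restrictScalars', ContinuousLinearMap.smulRight_apply,
        ContinuousLinearMap.one_apply, Complex.reCLM_apply, Complex.imCLM_apply,
        smul_eq_mul, one_smul, one_mul, Complex.mul_re, Complex.mul_im,
        Complex.one_re, Complex.one_im, Complex.I_re, Complex.I_im]
      field_simp
      ring
  obtain ⟨L1, h1, h1x, h1y⟩ : ∃ L : ℂ →L[ℝ] ℝ,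
      HasFDerivAt (fun w => 2*(f w).im * (1+((f w).re*(f w).re+(f w).im*(f w).im))⁻¹) L z ∧
      L 1 = (2*d.im*(1+((f z).re*(f z).re+(f z).im*(f z).im)) - 2*(f z).im*(2*(f z).re*d.re+2*(f z).im*d.im)) / (1+((f z).re*(f z).re+(f z).im*(f z).im))^2 ∧
      L I = (2*d.re*(1+((f z).re*(f z).re+(f z).im*(f z).im)) - 2*(f z).im*(2*(f z).re*(-d.im)+2*(f z).im*d.re)) / (1+((f z).re*(f z).re+(f z).im*(f z).im))^2 := by
    refine ⟨_, (hv.const_mul 2).mul hinv, ?_, ?_⟩ <;>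
    · simp only [ContinuousLinearMap.add_apply, ContinuousLinearMap.smul_apply,
        ContinuousLinearMap.coe_comp', Function.comp_apply,
        ContinuousLinearMap.coe_restrictScalars', ContinuousLinearMap.smulRight_apply,
        ContinuousLinearMap.one_apply, Complex.reCLM_apply, Complex.imCLM_apply,
        smul_eq_mul, one_smul, one_mul, Complex.mul_re, Complex.mul_im,
        Complex.one_re, Complex.one_im, Complex.I_re, Complex.I_im]
      field_simp
      ring
  obtain ⟨L2, h2, h2x, h2y⟩ : ∃ L : ℂ →L[ℝ] ℝ,
      HasFDerivAt (fun w => ((f w).re*(f w).re+(f w).im*(f w).im-1) * (1+((f w).re*(f w).re+(f w).im*(f w).im))⁻¹) L z ∧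
      L 1 = (2*(2*(f z).re*d.re+2*(f z).im*d.im)) / (1+((f z).re*(f z).re+(f z).im*(f z).im))^2 ∧
      L I = (2*(2*(f z).re*(-d.im)+2*(f z).im*d.re)) / (1+((f z).re*(f z).re+(f z).im*(f z).im))^2 := by
    refine ⟨_, (((hu.mul hu).add (hv.mul hv)).sub_const 1).mul hinv, ?_, ?_⟩ <;>
    · simp only [ContinuousLinearMap.add_apply, ContinuousLinearMap.smul_apply,
        ContinuousLinearMap.sub_apply, ContinuousLinearMap.coe_comp', Function.comp_apply,
        Pi.add_apply, Pi.mul_apply,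
        ContinuousLinearMap.coe_restrictScalars', ContinuousLinearMap.smulRight_apply,
        ContinuousLinearMap.one_apply, Complex.reCLM_apply, Complex.imCLM_apply,
        smul_eq_mul, one_smul, one_mul, Complex.mul_re, Complex.mul_im,
        Complex.one_re, Complex.one_im, Complex.I_re, Complex.I_im]
      field_simp
      ring
  have hP : HasFDerivAt (fun w => ![2*(f w).re * (1+((f w).re*(f w).re+(f w).im*(f w).im))⁻¹,
      2*(f w).im * (1+((f w).re*(f w).re+(f w).im*(f w).im))⁻¹,
      ((f w).re*(f w).re+(f w).im*(f w).im-1) * (1+((f w).re*(f w).re+(f w).im*(f w).im))⁻¹])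
      (ContinuousLinearMap.pi ![L0, L1, L2]) z := by
    apply hasFDerivAt_pi''
    intro i
    fin_cases i
    · simpa [ContinuousLinearMap.proj_pi] using h0
    · simpa [ContinuousLinearMap.proj_pi] using h1
    · simpa [ContinuousLinearMap.proj_pi] using h2
  have hL := (((EuclideanSpace.equiv (Fin 3) ℝ).symm :
      (Fin 3 → ℝ) →L[ℝ] EuclideanSpace ℝ (Fin 3)).hasFDerivAt).comp z hP
  refine ⟨_, hL, ?_, ?_⟩
  · show (EuclideanSpace.equiv (Fin 3) ℝ).symm (ContinuousLinearMap.pi ![L0, L1, L2] 1) = _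
    rw [nxv, sv]
    congr 1
    funext i
    fin_cases i <;>
      simp [ContinuousLinearMap.pi_apply, h0x, h1x, h2x]
  · show (EuclideanSpace.equiv (Fin 3) ℝ).symm (ContinuousLinearMap.pi ![L0, L1, L2] I) = _
    rw [nxv, sv]
    congr 1
    funext i
    fin_cases i <;>
      simp [ContinuousLinearMap.pi_apply, h0y, h1y, h2y]



/-- with `N` the inverse stereographic image of the holomorphic map `f₁`,
`τ = log (2|f₁'|/(1+|f₁|²))`, `ρ` smooth, and `X := ∇ρ + ρN` (gradient with respect to
the metric `e^{2τ}(dx²+dy²)`, i.e. `X = e^{-2τ}(ρ_x N_x + ρ_y N_y) + ρN`), one has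
`⟨X,N⟩ = ρ`, `⟨X_x,N⟩ = 0` and `⟨X_y,N⟩ = 0` on `Ω`: `N` is a unit normal for `X` and
`ρ` is its support function. -/
theorem gauss_map_and_support_function_of_support_parametrization
    (Ω : Set ℂ) (hΩ : IsOpen Ω) (f₁ : ℂ → ℂ)
    (hf₁ : DifferentiableOn ℂ f₁ Ω) (hf₁' : ∀ z ∈ Ω, deriv f₁ z ≠ 0)
    (N : ℂ → EuclideanSpace ℝ (Fin 3))
    (hN : ∀ z ∈ Ω,
      N z 0 = 2 * (f₁ z).re / (1 + ‖f₁ z‖ ^ 2) ∧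
      N z 1 = 2 * (f₁ z).im / (1 + ‖f₁ z‖ ^ 2) ∧
      N z 2 = (‖f₁ z‖ ^ 2 - 1) / (1 + ‖f₁ z‖ ^ 2))
    (τ : ℂ → ℝ)
    (hτ : ∀ z ∈ Ω, τ z =
      Real.log (2 * ‖deriv f₁ z‖ / (1 + ‖f₁ z‖ ^ 2)))
    (ρ : ℂ → ℝ) (hρ : ContDiffOn ℝ (⊤ : ℕ∞) ρ Ω)
    (X : ℂ → EuclideanSpace ℝ (Fin 3))
    (hX : ∀ z ∈ Ω, X z = Real.exp (-(2 * τ z)) •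
        (pdx ρ z • fderiv ℝ N z 1 + pdy ρ z • fderiv ℝ N z Complex.I) + ρ z • N z) :
    ∀ z ∈ Ω, ⟪X z, N z⟫ = ρ z ∧
      ⟪fderiv ℝ X z 1, N z⟫ = 0 ∧ ⟪fderiv ℝ X z Complex.I, N z⟫ = 0 := by
  have hga : AnalyticOnNhd ℂ (deriv f₁) Ω := (hf₁.analyticOnNhd hΩ).deriv
  -- N agrees with the explicit stereographic map on Ω
  have hNeq : ∀ z ∈ Ω, N z = (fun w => NNc (f₁ w).re (f₁ w).im) z := by
    intro z hz
    obtain ⟨e0, e1, e2⟩ := hN z hz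
    ext i
    fin_cases i
    · show N z 0 = _
      rw [e0]
      simp only [NNc, sv_apply0, Complex.sq_norm, Complex.normSq_apply, div_eq_mul_inv]
      rfl
    · show N z 1 = _
      rw [e1]
      simp only [NNc, sv_apply1, Complex.sq_norm, Complex.normSq_apply, div_eq_mul_inv]
      rfl
    · show N z 2 = _
      rw [e2]
      simp only [NNc, sv_apply2, Complex.sq_norm, Complex.normSq_apply, div_eq_mul_inv]
      rfl
  have hder : ∀ z ∈ Ω, DifferentiableAt ℝ (fun w => NNc (f₁ w).re (f₁ w).im) z ∧
      fderiv ℝ (fun w => NNc (f₁ w).re (f₁ w).im) z 1 = (fun w => nxv (f₁ w).re (f₁ w).im (deriv f₁ w).re (deriv f₁ w).im) z ∧ fderiv ℝ (fun w => NNc (f₁ w).re (f₁ w).im) z Complex.I = (fun w => nxv (f₁ w).re (f₁ w).im (-(deriv f₁ w).im) (deriv f₁ w).re) z := by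
    intro z hz
    obtain ⟨L, hL, hL1, hLI⟩ :=
      NN_hasFDerivAt ((hf₁.differentiableAt (hΩ.mem_nhds hz)).hasDerivAt)
    exact ⟨hL.differentiableAt, by rw [hL.fderiv]; exact hL1, by rw [hL.fderiv]; exact hLI⟩
  have hderN : ∀ z ∈ Ω, fderiv ℝ N z = fderiv ℝ (fun w => NNc (f₁ w).re (f₁ w).im) z := fun z hz =>
    (Filter.eventuallyEq_of_mem (hΩ.mem_nhds hz) hNeq).fderiv_eq
  -- the conformal factor
  have hWeq : ∀ z ∈ Ω, Real.exp (-(2 * τ z)) = (fun w => (1+((f₁ w).re*(f₁ w).re+(f₁ w).im*(f₁ w).im))^2 / (4*((deriv f₁ w).re*(deriv f₁ w).re+(deriv f₁ w).im*(deriv f₁ w).im))) z := by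
    intro z hz
    have hd0 : 0 < ‖deriv f₁ z‖ := norm_pos_iff.mpr (hf₁' z hz)
    have hq : (0:ℝ) < 1 + ‖f₁ z‖ ^ 2 := by positivity
    rw [hτ z hz]
    have ht : 0 < 2 * ‖deriv f₁ z‖ / (1 + ‖f₁ z‖ ^ 2) := by positivity
    rw [show -(2 * Real.log (2 * ‖deriv f₁ z‖ / (1 + ‖f₁ z‖ ^ 2)))
        = Real.log (((2 * ‖deriv f₁ z‖ / (1 + ‖f₁ z‖ ^ 2))^2)⁻¹) by
      rw [Real.log_inv, Real.log_pow]; push_cast; ring]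
    rw [Real.exp_log (by positivity)]
    rw [div_pow, inv_div, mul_pow]
    simp only [Complex.sq_norm, Complex.normSq_apply]
    norm_num
  -- the support parametrization in explicit form
  have hXeq : ∀ z ∈ Ω, X z = (fun w => (fun w => (1+((f₁ w).re*(f₁ w).re+(f₁ w).im*(f₁ w).im))^2 / (4*((deriv f₁ w).re*(deriv f₁ w).re+(deriv f₁ w).im*(deriv f₁ w).im))) w • (pdx ρ w • (fun w => nxv (f₁ w).re (f₁ w).im (deriv f₁ w).re (deriv f₁ w).im) w + pdy ρ w • (fun w => nxv (f₁ w).re (f₁ w).im (-(deriv f₁ w).im) (deriv f₁ w).re) w) + ρ w • (fun w => NNc (f₁ w).re (f₁ w).im) w) z := by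
    intro z hz
    obtain ⟨hdiff, h1, hI⟩ := hder z hz
    rw [hX z hz, hderN z hz, h1, hI, hWeq z hz, hNeq z hz]
  -- the support function identity
  have key : ∀ z ∈ Ω, ⟪X z, (fun w => NNc (f₁ w).re (f₁ w).im) z⟫ = ρ z := by
    intro z hz
    rw [hXeq z hz]
    simp only [inner_add_left, real_inner_smul_left, inner_nxv_NNc, inner_NNc_self,
      mul_zero, zero_mul, mul_one, add_zero, zero_add]
  have keyx : ∀ z ∈ Ω, ⟪X z, (fun w => nxv (f₁ w).re (f₁ w).im (deriv f₁ w).re (deriv f₁ w).im) z⟫ = pdx ρ z ∧ ⟪X z, (fun w => nxv (f₁ w).re (f₁ w).im (-(deriv f₁ w).im) (deriv f₁ w).re) z⟫ = pdy ρ z := by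
    intro z hz
    have h1 : ((1+((f₁ z).re*(f₁ z).re+(f₁ z).im*(f₁ z).im)) : ℝ) ≠ 0 :=
      (one_add_sq_pos (f₁ z).re (f₁ z).im).ne'
    have h2 : ((deriv f₁ z).re*(deriv f₁ z).re+(deriv f₁ z).im*(deriv f₁ z).im : ℝ) ≠ 0 := by
      have h := Complex.normSq_pos.mpr (hf₁' z hz)
      rw [Complex.normSq_apply] at h
      exact h.ne'
    have h2' : (deriv f₁ z).re ^ 2 + (deriv f₁ z).im ^ 2 ≠ 0 := by simpa [sq] using h2
    have h2'' : (deriv f₁ z).im ^ 2 + (deriv f₁ z).re ^ 2 ≠ 0 := by rwa [add_comm]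
    constructor
    · rw [hXeq z hz]
      simp only [inner_add_left, real_inner_smul_left, inner_nxv_nxv, inner_nyv_nxv,
        inner_NNc_nxv, mul_zero, zero_mul, mul_one, add_zero, zero_add]
      field_simp
    · rw [hXeq z hz]
      simp only [inner_add_left, real_inner_smul_left, inner_nxv_nxv, inner_nxv_nyv,
        inner_NNc_nxv, mul_zero, zero_mul, mul_one, add_zero, zero_add]
      field_simp
      ring
  intro z hz
  have hz' : Ω ∈ nhds z := hΩ.mem_nhds hz
  refine ⟨by rw [hNeq z hz]; exact key z hz, ?_, ?_⟩
  all_goals {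
    have hu' : DifferentiableAt ℝ (fun w => (f₁ w).re) z :=
      (Complex.reCLM.differentiable.differentiableAt).comp z
        ((hf₁.differentiableAt hz').restrictScalars ℝ)
    have hv' : DifferentiableAt ℝ (fun w => (f₁ w).im) z :=
      (Complex.imCLM.differentiable.differentiableAt).comp z
        ((hf₁.differentiableAt hz').restrictScalars ℝ)
    have hA' : DifferentiableAt ℝ (fun w => (deriv f₁ w).re) z :=
      (Complex.reCLM.differentiable.differentiableAt).comp z
        (((hga z hz).differentiableAt).restrictScalars ℝ)
    have hB' : DifferentiableAt ℝ (fun w => (deriv f₁ w).im) z :=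
      (Complex.imCLM.differentiable.differentiableAt).comp z
        (((hga z hz).differentiableAt).restrictScalars ℝ)
    have hNxd : DifferentiableAt ℝ (fun w => nxv (f₁ w).re (f₁ w).im (deriv f₁ w).re (deriv f₁ w).im) z := nxv_diff hu' hv' hA' hB'
    have hNyd : DifferentiableAt ℝ (fun w => nxv (f₁ w).re (f₁ w).im (-(deriv f₁ w).im) (deriv f₁ w).re) z := nxv_diff hu' hv' hB'.neg hA'
    have hNNd : DifferentiableAt ℝ (fun w => NNc (f₁ w).re (f₁ w).im) z := (hder z hz).1
    have h2 : ((deriv f₁ z).re*(deriv f₁ z).re+(deriv f₁ z).im*(deriv f₁ z).im : ℝ) ≠ 0 := by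
      have h := Complex.normSq_pos.mpr (hf₁' z hz)
      rw [Complex.normSq_apply] at h
      exact h.ne'
    have hWd : DifferentiableAt ℝ (fun w => (1+((f₁ w).re*(f₁ w).re+(f₁ w).im*(f₁ w).im))^2 / (4*((deriv f₁ w).re*(deriv f₁ w).re+(deriv f₁ w).im*(deriv f₁ w).im))) z := by
      simp only [div_eq_mul_inv]
      exact DifferentiableAt.mul (by fun_prop)
        (DifferentiableAt.inv (by fun_prop) (by simpa using h2))
    have hρd : DifferentiableAt ℝ ρ z :=
      ((hρ.differentiableOn (by simp)) z hz).differentiableAt hz'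
    have hfc : ContDiffOn ℝ (⊤:ℕ∞) (fderiv ℝ ρ) Ω :=
      hρ.fderiv_of_isOpen hΩ (by exact_mod_cast (le_top : (⊤:ℕ∞) + 1 ≤ ⊤))
    have hfd : DifferentiableAt ℝ (fderiv ℝ ρ) z :=
      ((hfc.differentiableOn (by simp)) z hz).differentiableAt hz'
    have hpd : DifferentiableAt ℝ (pdx ρ) z :=
      ((ContinuousLinearMap.apply ℝ ℝ (1:ℂ)).differentiable.differentiableAt).comp z hfd
    have hsd : DifferentiableAt ℝ (pdy ρ) z :=
      ((ContinuousLinearMap.apply ℝ ℝ (Complex.I)).differentiable.differentiableAt).comp z hfd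
    have hGd : DifferentiableAt ℝ (fun w => (fun w => (1+((f₁ w).re*(f₁ w).re+(f₁ w).im*(f₁ w).im))^2 / (4*((deriv f₁ w).re*(deriv f₁ w).re+(deriv f₁ w).im*(deriv f₁ w).im))) w • (pdx ρ w • (fun w => nxv (f₁ w).re (f₁ w).im (deriv f₁ w).re (deriv f₁ w).im) w + pdy ρ w • (fun w => nxv (f₁ w).re (f₁ w).im (-(deriv f₁ w).im) (deriv f₁ w).re) w) + ρ w • (fun w => NNc (f₁ w).re (f₁ w).im) w) z :=
      (hWd.smul ((hpd.smul hNxd).add (hsd.smul hNyd))).add (hρd.smul hNNd)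
    have hXd : DifferentiableAt ℝ X z :=
      hGd.congr_of_eventuallyEq (Filter.eventuallyEq_of_mem hz' hXeq)
    have hRd : (fun w => ⟪X w, (fun w => NNc (f₁ w).re (f₁ w).im) w⟫) =ᶠ[nhds z] ρ :=
      Filter.eventuallyEq_of_mem hz' (fun w hw => key w hw)
    have hfeq := Filter.EventuallyEq.fderiv_eq (𝕜 := ℝ) hRd
    rw [hNeq z hz]
    first
    | · have e := fderiv_inner_apply (𝕜 := ℝ) hXd hNNd (1:ℂ)
        rw [hfeq, (hder z hz).2.1, (keyx z hz).1] at e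
        have hpdx : pdx ρ z = fderiv ℝ ρ z 1 := rfl
        linarith [e]
    | · have e := fderiv_inner_apply (𝕜 := ℝ) hXd hNNd (Complex.I)
        rw [hfeq, (hder z hz).2.2, (keyx z hz).2] at e
        have hpdy : pdy ρ z = fderiv ℝ ρ z Complex.I := rfl
        linarith [e]
  }
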